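/- For a cocommutative Hopf *-algebra H acting on a unital *-algebra A, every element a ∈ GL(H, A) takes values in the center of A: a(g) b = b a(g) for all g ∈ H and b ∈ A. -/
import Mathlib


open scoped TensorProduct

/-- A choice of a finite "Sweedler representation" of the comultiplication:
`Δ g = ∑ₚ p.1 ⊗ p.2` where `p` ranges over the list `rep g`. -/
structure SweedlerRep (C H : Type*) [CommSemiring C] [AddCommMonoid H] [Module C H]
    [CoalgebraStruct C H] where
  rep : H → List (H × H)
  rep_spec : ∀ g : H,
    Coalgebra.comul (R := C) g = ((rep g).map fun p => p.1 ⊗ₜ[C] p.2).sum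

section GLGroup

variable {C H A : Type*} [CommRing C] [StarRing C]
  [Ring H] [HopfAlgebra C H] [StarRing H] [StarModule C H]
  [Ring A] [Algebra C A] [StarRing A] [StarModule C A]

/-- The convolution product on `Hom(H, A)`: `(a * b)(g) = a(g₍₁₎) b(g₍₂₎)`. -/
def conv (Δ : SweedlerRep C H) (a b : H → A) : H → A :=
  fun g => ((Δ.rep g).map fun p => a p.1 * b p.2).sum

/-- The convolution unit `e(g) = ε(g)·1`. -/
def convUnit (C : Type*) {H : Type*} [CommRing C] [AddCommGroup H] [Module C H]
    [CoalgebraStruct C H] (A : Type*) [Ring A] [Algebra C A] : H → A :=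
  fun g => Coalgebra.counit (R := C) g • (1 : A)

/-- Membership in `GL(H, A)`: a `C`-linear map `a : H → A` with (i) normalization
`a(1) = 1`, (ii) action condition `a(gh) = a(g₍₁₎)(g₍₂₎ ▷ a(h))` and (iii) module
condition `(g₍₁₎ ▷ b) a(g₍₂₎) = a(g₍₁₎)(g₍₂₎ ▷ b)`. -/
def memGL (Δ : SweedlerRep C H) (act : H → A → A) (a : H → A) : Prop :=
  IsLinearMap C a ∧ a 1 = 1 ∧
  (∀ g h : H, a (g * h) = ((Δ.rep g).map fun p => a p.1 * act p.2 (a h)).sum) ∧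
  (∀ (g : H) (b : A),
    ((Δ.rep g).map fun p => act p.1 b * a p.2).sum
      = ((Δ.rep g).map fun p => a p.1 * act p.2 b).sum)

/-- The convolution inverse formula `a⁻¹(g) = g₍₂₎ ▷ a(S⁻¹(g₍₁₎))`. -/
def convInv (Δ : SweedlerRep C H) (act : H → A → A) (Sinv : H → H) (a : H → A) : H → A :=
  fun g => ((Δ.rep g).map fun p => act p.2 (a (Sinv p.1))).sum

end GLGroup

section Aux
variable {C H M : Type*} [CommRing C] [Ring H] [HopfAlgebra C H]
  [AddCommGroup M] [Module C M]

lemma SweedlerRep.apply_comul (Δ : SweedlerRep C H) (f : H ⊗[C] H →ₗ[C] M) (g : H) :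
    f (Coalgebra.comul (R := C) g) = ((Δ.rep g).map fun p => f (p.1 ⊗ₜ[C] p.2)).sum := by
  rw [Δ.rep_spec, map_list_sum, List.map_map]; rfl

lemma SweedlerRep.swap_sum (Δ : SweedlerRep C H)
    (hcocom : ∀ g : H, Coalgebra.comul (R := C) g
      = ((Δ.rep g).map fun p => p.2 ⊗ₜ[C] p.1).sum)
    (f : H ⊗[C] H →ₗ[C] M) (g : H) :
    ((Δ.rep g).map fun p => f (p.1 ⊗ₜ[C] p.2)).sum
      = ((Δ.rep g).map fun p => f (p.2 ⊗ₜ[C] p.1)).sum := by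
  rw [← Δ.apply_comul f g, hcocom g, map_list_sum, List.map_map]; rfl

lemma SweedlerRep.counit_left (Δ : SweedlerRep C H) (g : H) :
    ((Δ.rep g).map fun p => Coalgebra.counit (R := C) p.1 • p.2).sum = g := by
  have h := Δ.apply_comul ((TensorProduct.lid C H).toLinearMap ∘ₗ
    ((Coalgebra.counit (R := C) (A := H)).rTensor H)) g
  simp only [LinearMap.comp_apply, Coalgebra.rTensor_counit_comul, LinearMap.rTensor_tmul,
    LinearEquiv.coe_coe, TensorProduct.lid_tmul, one_smul] at h
  exact h.symm

lemma SweedlerRep.counit_right (Δ : SweedlerRep C H) (g : H) :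
    ((Δ.rep g).map fun p => Coalgebra.counit (R := C) p.2 • p.1).sum = g := by
  have h := Δ.apply_comul ((TensorProduct.rid C H).toLinearMap ∘ₗ
    ((Coalgebra.counit (R := C) (A := H)).lTensor H)) g
  simp only [LinearMap.comp_apply, Coalgebra.lTensor_counit_comul, LinearMap.lTensor_tmul,
    LinearEquiv.coe_coe, TensorProduct.rid_tmul, one_smul] at h
  exact h.symm

lemma SweedlerRep.antipode_sum (Δ : SweedlerRep C H) (g : H) :
    ((Δ.rep g).map fun p => p.1 * HopfAlgebra.antipode (R := C) p.2).sum
      = Coalgebra.counit (R := C) g • (1 : H) := by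
  have h := Δ.apply_comul (LinearMap.mul' C H ∘ₗ
    (HopfAlgebra.antipode (R := C) (A := H)).lTensor H) g
  simp only [LinearMap.comp_apply, HopfAlgebra.mul_antipode_lTensor_comul_apply,
    LinearMap.lTensor_tmul, LinearMap.mul'_apply, Algebra.algebraMap_eq_smul_one] at h
  exact h.symm

lemma SweedlerRep.nested_left (Δ : SweedlerRep C H)
    (Ψ : (H ⊗[C] H) ⊗[C] H →ₗ[C] M) (g : H) :
    Ψ ((Coalgebra.comul (R := C) (A := H)).rTensor H (Coalgebra.comul (R := C) g))
      = ((Δ.rep g).map fun p =>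
          ((Δ.rep p.1).map fun q => Ψ ((q.1 ⊗ₜ[C] q.2) ⊗ₜ[C] p.2)).sum).sum := by
  have key : ∀ p : H × H,
      Ψ ((Coalgebra.comul (R := C) (A := H)).rTensor H (p.1 ⊗ₜ[C] p.2))
        = ((Δ.rep p.1).map fun q => Ψ ((q.1 ⊗ₜ[C] q.2) ⊗ₜ[C] p.2)).sum := by
    intro p
    have h2 := Δ.apply_comul (Ψ ∘ₗ ((TensorProduct.mk C (H ⊗[C] H) H).flip p.2)) p.1
    simpa [LinearMap.rTensor_tmul] using h2
  have h := Δ.apply_comul (Ψ ∘ₗ (Coalgebra.comul (R := C) (A := H)).rTensor H) g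
  simp only [LinearMap.comp_apply] at h
  simp only [h, key]

lemma SweedlerRep.nested_right (Δ : SweedlerRep C H)
    (Ψ : (H ⊗[C] H) ⊗[C] H →ₗ[C] M) (g : H) :
    Ψ ((Coalgebra.comul (R := C) (A := H)).rTensor H (Coalgebra.comul (R := C) g))
      = ((Δ.rep g).map fun p =>
          ((Δ.rep p.2).map fun q => Ψ ((p.1 ⊗ₜ[C] q.1) ⊗ₜ[C] q.2)).sum).sum := by
  rw [← Coalgebra.coassoc_symm_apply]
  have key : ∀ p : H × H,
      Ψ ((TensorProduct.assoc C H H H).symm (p.1 ⊗ₜ[C] Coalgebra.comul (R := C) p.2))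
        = ((Δ.rep p.2).map fun q => Ψ ((p.1 ⊗ₜ[C] q.1) ⊗ₜ[C] q.2)).sum := by
    intro p
    have h2 := Δ.apply_comul ((Ψ ∘ₗ (TensorProduct.assoc C H H H).symm.toLinearMap) ∘ₗ
      (TensorProduct.mk C H (H ⊗[C] H) p.1)) p.2
    simpa [TensorProduct.assoc_symm_tmul] using h2
  have h := Δ.apply_comul ((Ψ ∘ₗ (TensorProduct.assoc C H H H).symm.toLinearMap) ∘ₗ
    (Coalgebra.comul (R := C) (A := H)).lTensor H) g
  simp only [LinearMap.comp_apply, LinearMap.lTensor_tmul, LinearEquiv.coe_coe] at h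
  simp only [h, key]

lemma SweedlerRep.lsum_swap (Δ : SweedlerRep C H)
    (hcocom : ∀ g : H, Coalgebra.comul (R := C) g
      = ((Δ.rep g).map fun p => p.2 ⊗ₜ[C] p.1).sum)
    (Ψ : (H ⊗[C] H) ⊗[C] H →ₗ[C] M) (g : H) :
    ((Δ.rep g).map fun p =>
        ((Δ.rep p.1).map fun q => Ψ ((q.1 ⊗ₜ[C] q.2) ⊗ₜ[C] p.2)).sum).sum
      = ((Δ.rep g).map fun p =>
        ((Δ.rep p.1).map fun q => Ψ ((q.2 ⊗ₜ[C] q.1) ⊗ₜ[C] p.2)).sum).sum := by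
  have key : ∀ p : H × H,
      ((Δ.rep p.1).map fun q => Ψ ((q.1 ⊗ₜ[C] q.2) ⊗ₜ[C] p.2)).sum
        = ((Δ.rep p.1).map fun q => Ψ ((q.2 ⊗ₜ[C] q.1) ⊗ₜ[C] p.2)).sum := by
    intro p
    have := Δ.swap_sum hcocom (Ψ ∘ₗ ((TensorProduct.mk C (H ⊗[C] H) H).flip p.2)) p.1
    simpa using this
  simp only [key]

lemma SweedlerRep.rsum_cyclic (Δ : SweedlerRep C H)
    (hcocom : ∀ g : H, Coalgebra.comul (R := C) g
      = ((Δ.rep g).map fun p => p.2 ⊗ₜ[C] p.1).sum)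
    (Ψ : (H ⊗[C] H) ⊗[C] H →ₗ[C] M) (g : H) :
    ((Δ.rep g).map fun p =>
        ((Δ.rep p.2).map fun q => Ψ ((p.1 ⊗ₜ[C] q.1) ⊗ₜ[C] q.2)).sum).sum
      = ((Δ.rep g).map fun p =>
        ((Δ.rep p.2).map fun q => Ψ ((q.2 ⊗ₜ[C] p.1) ⊗ₜ[C] q.1)).sum).sum := by
  set Θ : H ⊗[C] H →ₗ[C] M :=
    (Ψ ∘ₗ (TensorProduct.assoc C H H H).symm.toLinearMap) ∘ₗ
      (Coalgebra.comul (R := C) (A := H)).lTensor H with hΘdef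
  have hΘ : ∀ x y : H,
      Θ (x ⊗ₜ[C] y) = ((Δ.rep y).map fun q => Ψ ((x ⊗ₜ[C] q.1) ⊗ₜ[C] q.2)).sum := by
    intro x y
    have h2 := Δ.apply_comul ((Ψ ∘ₗ (TensorProduct.assoc C H H H).symm.toLinearMap) ∘ₗ
      (TensorProduct.mk C H (H ⊗[C] H) x)) y
    simp only [LinearMap.comp_apply, TensorProduct.mk_apply, LinearEquiv.coe_coe,
      TensorProduct.assoc_symm_tmul] at h2
    simpa [hΘdef, LinearMap.lTensor_tmul] using h2
  set Ψ' : (H ⊗[C] H) ⊗[C] H →ₗ[C] M := Ψ ∘ₗ (TensorProduct.assoc C H H H).symm.toLinearMap ∘ₗ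
    (TensorProduct.comm C (H ⊗[C] H) H).toLinearMap with hΨ'def
  have hΨ' : ∀ x y z : H, Ψ' ((x ⊗ₜ[C] y) ⊗ₜ[C] z) = Ψ ((z ⊗ₜ[C] x) ⊗ₜ[C] y) := by
    intro x y z
    simp [hΨ'def, TensorProduct.comm_tmul, TensorProduct.assoc_symm_tmul]
  calc ((Δ.rep g).map fun p =>
        ((Δ.rep p.2).map fun q => Ψ ((p.1 ⊗ₜ[C] q.1) ⊗ₜ[C] q.2)).sum).sum
      = ((Δ.rep g).map fun p => Θ (p.1 ⊗ₜ[C] p.2)).sum := by simp only [hΘ]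
    _ = ((Δ.rep g).map fun p => Θ (p.2 ⊗ₜ[C] p.1)).sum := Δ.swap_sum hcocom Θ g
    _ = ((Δ.rep g).map fun p =>
        ((Δ.rep p.1).map fun q => Ψ ((p.2 ⊗ₜ[C] q.1) ⊗ₜ[C] q.2)).sum).sum := by simp only [hΘ]
    _ = ((Δ.rep g).map fun p =>
        ((Δ.rep p.1).map fun q => Ψ' ((q.1 ⊗ₜ[C] q.2) ⊗ₜ[C] p.2)).sum).sum := by simp only [hΨ']
    _ = Ψ' ((Coalgebra.comul (R := C) (A := H)).rTensor H (Coalgebra.comul (R := C) g)) :=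
        (Δ.nested_left Ψ' g).symm
    _ = ((Δ.rep g).map fun p =>
        ((Δ.rep p.2).map fun q => Ψ' ((p.1 ⊗ₜ[C] q.1) ⊗ₜ[C] q.2)).sum).sum :=
        Δ.nested_right Ψ' g
    _ = ((Δ.rep g).map fun p =>
        ((Δ.rep p.2).map fun q => Ψ ((q.2 ⊗ₜ[C] p.1) ⊗ₜ[C] q.1)).sum).sum := by simp only [hΨ']

end Aux

/-- For a cocommutative Hopf `*`-algebra `H` acting on a unital
`*`-algebra `A`, every element `a ∈ GL(H, A)` takes values in the center of `A`. -/
theorem memGL_central_of_cocommutative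
    {C H A : Type*} [CommRing C] [StarRing C]
    [Ring H] [HopfAlgebra C H] [StarRing H] [StarModule C H]
    [Ring A] [Algebra C A] [StarRing A] [StarModule C A]
    (Δ : SweedlerRep C H)
    -- `H` is cocommutative: `Δ = Δ^op`
    (hcocom : ∀ g : H, Coalgebra.comul (R := C) g
      = ((Δ.rep g).map fun p => p.2 ⊗ₜ[C] p.1).sum)
    -- `act` is a `*`-action of `H` on the unital `*`-algebra `A`
    (act : H → A → A)
    (hact_one : ∀ a, act 1 a = a)
    (hact_mulH : ∀ g h a, act (g * h) a = act g (act h a))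
    (hact_lin : ∀ a : A, IsLinearMap C fun g => act g a)
    (hact_linA : ∀ g : H, IsLinearMap C (act g))
    (hact_alg : ∀ (g : H) (a b : A), act g (a * b) =
      ((Δ.rep g).map fun p => act p.1 a * act p.2 b).sum)
    (hact_star : ∀ g a, star (act g a) =
      act (star (HopfAlgebra.antipode (R := C) g)) (star a))
    (hact_unit : ∀ g : H, act g (1 : A) = Coalgebra.counit (R := C) g • (1 : A))
    -- `a ∈ GL(H, A)`
    (a : H → A) (ha : memGL Δ act a) :
    ∀ (g : H) (b : A), a g * b = b * a g := by
  obtain ⟨halin, -, -, hmod⟩ := ha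
  intro g b
  symm
  set S : H →ₗ[C] H := HopfAlgebra.antipode (R := C) with hSdef
  set aL : H →ₗ[C] A := IsLinearMap.mk' a halin with haLdef
  set actb : H →ₗ[C] A := IsLinearMap.mk' (fun h => act h b) (hact_lin b) with hactbdef
  set mS : H ⊗[C] H →ₗ[C] H := LinearMap.mul' C H ∘ₗ S.lTensor H with hmSdef
  have hmS : ∀ x y : H, mS (x ⊗ₜ[C] y) = x * S y := by
    intro x y; simp [hmSdef]
  set Ψ₂ : (H ⊗[C] H) ⊗[C] H →ₗ[C] A :=
    (LinearMap.mul' C A ∘ₗ TensorProduct.map (actb ∘ₗ mS) aL) ∘ₗ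
      ((TensorProduct.comm C H H).toLinearMap.rTensor H) with hΨ₂def
  have hΨ₂ : ∀ x y z : H, Ψ₂ ((x ⊗ₜ[C] y) ⊗ₜ[C] z) = act (y * S x) b * a z := by
    intro x y z
    simp [hΨ₂def, hmS, haLdef, hactbdef]
  set Ψ₃ : (H ⊗[C] H) ⊗[C] H →ₗ[C] A :=
    LinearMap.mul' C A ∘ₗ TensorProduct.map aL (actb ∘ₗ mS) ∘ₗ
      (TensorProduct.assoc C H H H).toLinearMap ∘ₗ
      (TensorProduct.comm C H (H ⊗[C] H)).toLinearMap ∘ₗ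
      (TensorProduct.assoc C H H H).toLinearMap with hΨ₃def
  have hΨ₃ : ∀ x y z : H, Ψ₃ ((x ⊗ₜ[C] y) ⊗ₜ[C] z) = a y * act (z * S x) b := by
    intro x y z
    simp [hΨ₃def, hmS, haLdef, hactbdef]
  -- a of a list sum
  have hagen : ∀ (l : List (H × H)) (t : H × H → H),
      a ((l.map t).sum) = (l.map fun p => a (t p)).sum := by
    intro l t
    rw [show a = ⇑aL from rfl, map_list_sum, List.map_map]; rfl
  have hactgen : ∀ (l : List (H × H)) (t : H × H → H),
      act ((l.map t).sum) b = (l.map fun p => act (t p) b).sum := by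
    intro l t
    calc act ((l.map t).sum) b = actb ((l.map t).sum) := rfl
      _ = _ := by rw [map_list_sum, List.map_map]; rfl
  -- ε h • b = ∑ act (q.1 * S q.2) b
  have key2 : ∀ h : H, ((Δ.rep h).map fun q => act (q.1 * S q.2) b).sum
      = Coalgebra.counit (R := C) h • b := by
    intro h
    have hanti := Δ.antipode_sum h
    rw [← hSdef] at hanti
    calc ((Δ.rep h).map fun q => act (q.1 * S q.2) b).sum
        = act (((Δ.rep h).map fun q => q.1 * S q.2).sum) b := (hactgen _ _).symm
      _ = act (Coalgebra.counit (R := C) h • (1 : H)) b := by rw [hanti]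
      _ = Coalgebra.counit (R := C) h • b := by
          rw [(hact_lin b).map_smul, hact_one]
  calc b * a g
      = b * ((Δ.rep g).map fun p => Coalgebra.counit (R := C) p.1 • a p.2).sum := by
        congr 1
        conv_lhs => rw [← Δ.counit_left g, hagen]
        simp only [halin.map_smul]
    _ = ((Δ.rep g).map fun p => (Coalgebra.counit (R := C) p.1 • b) * a p.2).sum := by
        rw [← List.sum_map_mul_left]
        simp only [mul_smul_comm, smul_mul_assoc]
    _ = ((Δ.rep g).map fun p =>
          ((Δ.rep p.1).map fun q => act (q.1 * S q.2) b).sum * a p.2).sum := by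
        simp only [key2]
    _ = ((Δ.rep g).map fun p =>
          ((Δ.rep p.1).map fun q => Ψ₂ ((q.2 ⊗ₜ[C] q.1) ⊗ₜ[C] p.2)).sum).sum := by
        simp only [hΨ₂, List.sum_map_mul_right]
    _ = ((Δ.rep g).map fun p =>
          ((Δ.rep p.1).map fun q => Ψ₂ ((q.1 ⊗ₜ[C] q.2) ⊗ₜ[C] p.2)).sum).sum :=
        (Δ.lsum_swap hcocom Ψ₂ g).symm
    _ = ((Δ.rep g).map fun p =>
          ((Δ.rep p.2).map fun q => Ψ₂ ((p.1 ⊗ₜ[C] q.1) ⊗ₜ[C] q.2)).sum).sum := by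
        rw [← Δ.nested_left Ψ₂ g, Δ.nested_right Ψ₂ g]
    _ = ((Δ.rep g).map fun p =>
          ((Δ.rep p.2).map fun q => act q.1 (act (S p.1) b) * a q.2).sum).sum := by
        simp only [hΨ₂, hact_mulH]
    _ = ((Δ.rep g).map fun p =>
          ((Δ.rep p.2).map fun q => a q.1 * act q.2 (act (S p.1) b)).sum).sum := by
        have hmod' : ∀ p : H × H,
            ((Δ.rep p.2).map fun q => act q.1 (act (S p.1) b) * a q.2).sum
              = ((Δ.rep p.2).map fun q => a q.1 * act q.2 (act (S p.1) b)).sum :=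
          fun p => hmod p.2 (act (S p.1) b)
        simp only [hmod']
    _ = ((Δ.rep g).map fun p =>
          ((Δ.rep p.2).map fun q => Ψ₃ ((p.1 ⊗ₜ[C] q.1) ⊗ₜ[C] q.2)).sum).sum := by
        simp only [hΨ₃, hact_mulH]
    _ = ((Δ.rep g).map fun p =>
          ((Δ.rep p.2).map fun q => Ψ₃ ((q.2 ⊗ₜ[C] p.1) ⊗ₜ[C] q.1)).sum).sum :=
        Δ.rsum_cyclic hcocom Ψ₃ g
    _ = ((Δ.rep g).map fun p =>
          a p.1 * ((Δ.rep p.2).map fun q => act (q.1 * S q.2) b).sum).sum := by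
        simp only [hΨ₃, List.sum_map_mul_left]
    _ = ((Δ.rep g).map fun p => (Coalgebra.counit (R := C) p.2 • a p.1) * b).sum := by
        simp only [key2, mul_smul_comm, smul_mul_assoc]
    _ = ((Δ.rep g).map fun p => Coalgebra.counit (R := C) p.2 • a p.1).sum * b := by
        rw [← List.sum_map_mul_right]
    _ = a g * b := by
        congr 1
        conv_rhs => rw [← Δ.counit_right g, hagen]
        simp only [halin.map_smul]
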